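/- Let X be a finite set of distinct points in R^K and let k(x,y) = exp(-γ‖x-y‖^2) be the Gaussian RBF kernel with γ > 0. Then the Gram matrix K_G with entries K_G(i,j) = k(x_i, x_j) over an enumeration x_1,...,x_m of X is strictly positive definite, and hence for any target values y_1,...,y_m ∈ R there exists a unique coefficient vector θ ∈ R^m with K_G θ = y, so that the function g(x) = Σ_i θ_i k(x_i, x) satisfies g(x_j) = y_j for all j. -/

import Mathlib

open Finset Matrix Polynomial

lemma sq_sum_helper {α β : Type*} [Fintype α] (F : Finset β) (g : α → β → ℝ) :
    ∑ i, ∑ j, ∑ f ∈ F, g i f * g j f = ∑ f ∈ F, (∑ i, g i f) ^ 2 :=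
  calc ∑ i, ∑ j, ∑ f ∈ F, g i f * g j f
      = ∑ i, ∑ f ∈ F, ∑ j, g i f * g j f :=
        Finset.sum_congr rfl (fun _ _ => Finset.sum_comm)
    _ = ∑ f ∈ F, ∑ i, ∑ j, g i f * g j f := Finset.sum_comm
    _ = ∑ f ∈ F, (∑ i, g i f) ^ 2 :=
        Finset.sum_congr rfl (fun f _ => by rw [sq, Finset.sum_mul_sum])

lemma Tnonneg {m K : ℕ} (x : Fin m → EuclideanSpace ℝ (Fin K)) (c : Fin m → ℝ) (n : ℕ) :
    0 ≤ ∑ i, ∑ j, c i * c j * (inner ℝ (x i) (x j) : ℝ) ^ n := by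
  have hinner : ∀ i j, (inner ℝ (x i) (x j) : ℝ) = ∑ k, x i k * x j k := by
    intro i j
    simp [PiLp.inner_apply, RCLike.inner_apply, mul_comm]
  set F := Fintype.piFinset (fun _ : Fin n => (univ : Finset (Fin K))) with hF
  have h1 : ∀ i j : Fin m, c i * c j * (inner ℝ (x i) (x j) : ℝ) ^ n
      = ∑ f ∈ F, (c i * ∏ t, x i (f t)) * (c j * ∏ t, x j (f t)) := by
    intro i j
    rw [hinner, Finset.sum_pow', ← hF, Finset.mul_sum]
    refine Finset.sum_congr rfl fun f _ => ?_
    rw [Finset.prod_mul_distrib]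
    ring
  simp_rw [h1]
  rw [sq_sum_helper F (fun i f => c i * ∏ t, x i (f t))]
  exact Finset.sum_nonneg fun f _ => sq_nonneg _

lemma contra_aux {m K : ℕ} (x : Fin m → EuclideanSpace ℝ (Fin K)) (hx : Function.Injective x)
    (c : Fin m → ℝ) (hc : c ≠ 0)
    (hT : ∀ n : ℕ, ∑ i, ∑ j, c i * c j * (inner ℝ (x i) (x j) : ℝ) ^ n = 0) : False := by
  classical
  have hcs : ∃ i, c i ≠ 0 := Function.ne_iff.mp hc
  set s : Finset (Fin m) := univ.filter fun i => c i ≠ 0 with hsdef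
  have hs : s.Nonempty := by
    obtain ⟨i, hi⟩ := hcs
    exact ⟨i, by simp [hsdef, hi]⟩
  set M : ℝ := (s.image fun i => ‖x i‖).max' (hs.image _) with hMdef
  have hMmem : M ∈ s.image fun i => ‖x i‖ := Finset.max'_mem _ _
  obtain ⟨i0, hi0s, hi0⟩ := Finset.mem_image.mp hMmem
  have hMle : ∀ i ∈ s, ‖x i‖ ≤ M := by
    intro i hi
    rw [hMdef]
    exact Finset.le_max' (s.image fun i => ‖x i‖) _ (Finset.mem_image_of_mem _ hi)
  have hM0 : 0 ≤ M := by rw [← hi0]; exact norm_nonneg _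
  -- any polynomial evaluates to zero in the weighted sum
  have hpoly : ∀ q : ℝ[X], ∑ i, ∑ j, c i * c j * q.eval (inner ℝ (x i) (x j) : ℝ) = 0 := by
    intro q
    have h1 : ∀ i j : Fin m, c i * c j * q.eval (inner ℝ (x i) (x j) : ℝ)
        = ∑ n ∈ range (q.natDegree + 1),
            q.coeff n * (c i * c j * (inner ℝ (x i) (x j) : ℝ) ^ n) := by
      intro i j
      rw [Polynomial.eval_eq_sum_range, Finset.mul_sum]
      exact Finset.sum_congr rfl fun n _ => by ring
    calc ∑ i, ∑ j, c i * c j * q.eval (inner ℝ (x i) (x j) : ℝ)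
        = ∑ i, ∑ n ∈ range (q.natDegree + 1), ∑ j,
            q.coeff n * (c i * c j * (inner ℝ (x i) (x j) : ℝ) ^ n) := by
          refine Finset.sum_congr rfl fun i _ => ?_
          simp_rw [h1]
          exact Finset.sum_comm
      _ = ∑ n ∈ range (q.natDegree + 1), ∑ i, ∑ j,
            q.coeff n * (c i * c j * (inner ℝ (x i) (x j) : ℝ) ^ n) := Finset.sum_comm
      _ = 0 := by
          refine Finset.sum_eq_zero fun n _ => ?_
          simp_rw [← Finset.mul_sum]
          rw [hT n, mul_zero]
  -- the polynomial vanishing at all inner products except M*M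
  set A : Finset ℝ := Finset.image (fun p : Fin m × Fin m => (inner ℝ (x p.1) (x p.2) : ℝ)) univ
    with hAdef
  set p : ℝ[X] := ∏ b ∈ A.erase (M * M), (X - C b) with hpdef
  have hpM : p.eval (M * M) ≠ 0 := by
    rw [hpdef, Polynomial.eval_prod]
    refine Finset.prod_ne_zero_iff.mpr fun b hb => ?_
    simp only [Polynomial.eval_sub, Polynomial.eval_X, Polynomial.eval_C]
    exact sub_ne_zero.mpr (Ne.symm (Finset.ne_of_mem_erase hb))
  have hpa : ∀ i j : Fin m, (inner ℝ (x i) (x j) : ℝ) ≠ M * M →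
      p.eval (inner ℝ (x i) (x j) : ℝ) = 0 := by
    intro i j hne
    rw [hpdef, Polynomial.eval_prod]
    refine Finset.prod_eq_zero (i := (inner ℝ (x i) (x j) : ℝ)) ?_ ?_
    · exact Finset.mem_erase.mpr ⟨hne, Finset.mem_image.mpr ⟨(i, j), Finset.mem_univ _, rfl⟩⟩
    · simp only [Polynomial.eval_sub, Polynomial.eval_X, Polynomial.eval_C, sub_self]
  -- Cauchy-Schwarz equality forces diagonal
  have hdiag : ∀ i j : Fin m, c i ≠ 0 → c j ≠ 0 →
      (inner ℝ (x i) (x j) : ℝ) = M * M → i = j := by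
    intro i j hci hcj hin
    have his : i ∈ s := by simp [hsdef, hci]
    have hjs : j ∈ s := by simp [hsdef, hcj]
    have hi : ‖x i‖ ≤ M := hMle i his
    have hj : ‖x j‖ ≤ M := hMle j hjs
    have hcs2 : (inner ℝ (x i) (x j) : ℝ) ≤ ‖x i‖ * ‖x j‖ := real_inner_le_norm _ _
    have h1 : ‖x i‖ * ‖x j‖ ≤ M * M :=
      mul_le_mul hi hj (norm_nonneg _) hM0
    have heqn : ‖x i‖ * ‖x j‖ = M * M := le_antisymm h1 (hin ▸ hcs2)
    have heq : (inner ℝ (x i) (x j) : ℝ) = ‖x i‖ * ‖x j‖ := by rw [hin, heqn]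
    rcases eq_or_lt_of_le hM0 with hM | hM
    · -- M = 0 : all norms zero
      have hxi : ‖x i‖ = 0 := le_antisymm (hi.trans (le_of_eq hM.symm)) (norm_nonneg _)
      have hxj : ‖x j‖ = 0 := le_antisymm (hj.trans (le_of_eq hM.symm)) (norm_nonneg _)
      exact hx (by rw [norm_eq_zero.mp hxi, norm_eq_zero.mp hxj])
    · have hni : ‖x i‖ = M := by nlinarith [norm_nonneg (x i), norm_nonneg (x j)]
      have hnj : ‖x j‖ = M := by nlinarith [norm_nonneg (x i), norm_nonneg (x j)]
      have := inner_eq_norm_mul_iff_real.mp heq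
      rw [hni, hnj] at this
      exact hx (smul_right_injective _ (ne_of_gt hM) this)
  -- now derive the contradiction using q = p^2
  have hzero := hpoly (p * p)
  have hterms : ∀ i j : Fin m,
      0 ≤ c i * c j * (p * p).eval (inner ℝ (x i) (x j) : ℝ) := by
    intro i j
    by_cases hin : (inner ℝ (x i) (x j) : ℝ) = M * M
    · by_cases hci : c i = 0
      · simp [hci]
      by_cases hcj : c j = 0
      · simp [hcj]
      have hij := hdiag i j hci hcj hin
      subst hij
      rw [Polynomial.eval_mul]
      have : 0 ≤ c i * c i := mul_self_nonneg _
      nlinarith [mul_self_nonneg (Polynomial.eval (inner ℝ (x i) (x i) : ℝ) p)]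
    · rw [Polynomial.eval_mul, hpa i j hin, zero_mul, mul_zero]
  have hpos : 0 < ∑ i, ∑ j, c i * c j * (p * p).eval (inner ℝ (x i) (x j) : ℝ) := by
    have hi0c : c i0 ≠ 0 := (Finset.mem_filter.mp hi0s).2
    have hii : (inner ℝ (x i0) (x i0) : ℝ) = M * M := by
      rw [real_inner_self_eq_norm_mul_norm, hi0]
    refine Finset.sum_pos' (fun i _ => Finset.sum_nonneg fun j _ => hterms i j) ⟨i0, Finset.mem_univ _, ?_⟩
    refine Finset.sum_pos' (fun j _ => hterms i0 j) ⟨i0, Finset.mem_univ _, ?_⟩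
    rw [hii, Polynomial.eval_mul]
    have h1 : 0 < c i0 * c i0 := mul_self_pos.mpr hi0c
    have h2 : 0 < p.eval (M * M) * p.eval (M * M) := by
      rcases lt_or_gt_of_ne hpM with h | h <;> nlinarith
    exact mul_pos h1 h2
  rw [hzero] at hpos
  exact lt_irrefl 0 hpos

lemma keypos {m K : ℕ} (x : Fin m → EuclideanSpace ℝ (Fin K)) (hx : Function.Injective x)
    {γ : ℝ} (hγ : 0 < γ) (c : Fin m → ℝ) (hc : c ≠ 0) :
    0 < ∑ i, ∑ j, c i * c j * Real.exp (2 * γ * (inner ℝ (x i) (x j) : ℝ)) := by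
  set T : ℕ → ℝ := fun n => ∑ i, ∑ j, c i * c j * (inner ℝ (x i) (x j) : ℝ) ^ n with hT
  have hTnn : ∀ n, 0 ≤ T n := fun n => Tnonneg x c n
  set U : ℕ → ℝ := fun n => ((2 * γ) ^ n / n.factorial) * T n with hU
  have hUnn : ∀ n, 0 ≤ U n := fun n => by
    have : (0:ℝ) ≤ (2 * γ) ^ n / n.factorial := by positivity
    exact mul_nonneg this (hTnn n)
  set g : Fin m → Fin m → ℕ → ℝ := fun i j n =>
    c i * c j * ((2 * γ) ^ n / n.factorial) * (inner ℝ (x i) (x j) : ℝ) ^ n with hg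
  have hsum2 : ∀ i j : Fin m, Summable (g i j) := by
    intro i j
    have h := (Real.summable_pow_div_factorial (2 * γ * (inner ℝ (x i) (x j) : ℝ))).mul_left
      (c i * c j)
    refine h.congr fun n => ?_
    rw [hg]; rw [mul_pow]; ring
  have hterm : ∀ i j : Fin m, c i * c j * Real.exp (2 * γ * (inner ℝ (x i) (x j) : ℝ))
      = ∑' n : ℕ, g i j n := by
    intro i j
    rw [Real.exp_eq_exp_ℝ, NormedSpace.exp_eq_tsum_div, ← tsum_mul_left]
    congr 1; funext n
    rw [hg]; rw [mul_pow]; ring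
  have hUeq : ∀ n, U n = ∑ i, ∑ j, g i j n := by
    intro n
    simp only [hU, hT, hg, Finset.mul_sum]
    exact Finset.sum_congr rfl fun i _ => Finset.sum_congr rfl fun j _ => by ring
  have hsplit : ∑ i, ∑ j, c i * c j * Real.exp (2 * γ * (inner ℝ (x i) (x j) : ℝ))
      = ∑' n : ℕ, U n := by
    simp_rw [hterm]
    calc ∑ i, ∑ j, ∑' n, g i j n
        = ∑ i, ∑' n, ∑ j, g i j n :=
          Finset.sum_congr rfl fun i _ => (Summable.tsum_finsetSum fun j _ => hsum2 i j).symm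
      _ = ∑' n, ∑ i, ∑ j, g i j n :=
          (Summable.tsum_finsetSum fun i _ => summable_sum fun j _ => hsum2 i j).symm
      _ = ∑' n, U n := by
          congr 1; funext n; rw [hUeq]
  have hsumU : Summable U := by
    refine Summable.congr ?_ fun n => (hUeq n).symm
    exact summable_sum fun i _ => summable_sum fun j _ => hsum2 i j
  rw [hsplit]
  rcases lt_or_ge 0 (∑' n, U n) with h | h
  · exact h
  exfalso
  have hU0 : ∀ n, U n = 0 := by
    intro n
    refine le_antisymm ?_ (hUnn n)
    calc U n ≤ ∑' k, U k := hsumU.le_tsum n fun k _ => hUnn k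
      _ ≤ 0 := h
  refine contra_aux x hx c hc fun n => ?_
  have hcoef : (0:ℝ) < (2 * γ) ^ n / n.factorial := by positivity
  have := hU0 n
  rw [hU] at this
  simp only at this
  rcases mul_eq_zero.mp this with h' | h'
  · exact absurd h' (ne_of_gt hcoef)
  · exact h'

/-- For distinct points `x_1, ..., x_m` in `ℝ^K` and the Gaussian RBF kernel
`k(x,y) = exp(-γ‖x-y‖²)` with `γ > 0`, the Gram matrix is strictly positive
definite; hence for any targets `y` there is a unique `θ` with `K_G θ = y`, and
the function `g(x) = Σ_i θ_i k(x_i, x)` interpolates: `g(x_j) = y_j` for all `j`. -/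
theorem stmt_7 {m K : ℕ} (x : Fin m → EuclideanSpace ℝ (Fin K))
    (hx : Function.Injective x) (γ : ℝ) (hγ : 0 < γ) :
    (Matrix.of fun i j => Real.exp (-γ * ‖x i - x j‖ ^ 2) :
        Matrix (Fin m) (Fin m) ℝ).PosDef ∧
    ∀ y : Fin m → ℝ, ∃! θ : Fin m → ℝ,
      (Matrix.of fun i j => Real.exp (-γ * ‖x i - x j‖ ^ 2) :
          Matrix (Fin m) (Fin m) ℝ).mulVec θ = y ∧
      ∀ j, (∑ i, θ i * Real.exp (-γ * ‖x i - x j‖ ^ 2)) = y j := by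
  set Km : Matrix (Fin m) (Fin m) ℝ :=
    Matrix.of fun i j => Real.exp (-γ * ‖x i - x j‖ ^ 2) with hKm
  have hfact : ∀ i j, Real.exp (-γ * ‖x i - x j‖ ^ 2)
      = Real.exp (-γ * ‖x i‖ ^ 2) * Real.exp (-γ * ‖x j‖ ^ 2)
        * Real.exp (2 * γ * (inner ℝ (x i) (x j) : ℝ)) := by
    intro i j
    rw [← Real.exp_add, ← Real.exp_add]
    congr 1
    rw [norm_sub_sq_real]
    ring
  have hPD : Km.PosDef := by
    rw [Matrix.posDef_iff_dotProduct_mulVec]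
    constructor
    · show Km.conjTranspose = Km
      ext i j
      simp only [hKm, Matrix.conjTranspose_apply, Matrix.of_apply, star_trivial,
        norm_sub_rev]
    · intro v hv
      set c : Fin m → ℝ := fun i => v i * Real.exp (-γ * ‖x i‖ ^ 2) with hcdef
      have hc : c ≠ 0 := by
        intro h0
        apply hv
        funext i
        have := congrFun h0 i
        simp only [hcdef, Pi.zero_apply] at this
        rcases mul_eq_zero.mp this with h | h
        · exact h
        · exact absurd h (Real.exp_ne_zero _)
      have hform : dotProduct (star v) (Km *ᵥ v)
          = ∑ i, ∑ j, c i * c j * Real.exp (2 * γ * (inner ℝ (x i) (x j) : ℝ)) := by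
        simp only [star_trivial, dotProduct, Matrix.mulVec, Matrix.of_apply, hKm,
          Finset.mul_sum]
        refine Finset.sum_congr rfl fun i _ => Finset.sum_congr rfl fun j _ => ?_
        rw [hfact i j, hcdef]
        ring
      rw [hform]
      exact keypos x hx hγ c hc
  refine ⟨hPD, fun y => ?_⟩
  have hdet : IsUnit Km.det := isUnit_iff_ne_zero.mpr hPD.det_pos.ne'
  have hsymm : ∀ i j, Km i j = Km j i := by
    intro i j
    simp only [hKm, Matrix.of_apply, norm_sub_rev]
  refine ⟨Km⁻¹ *ᵥ y, ⟨?_, ?_⟩, ?_⟩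
  · rw [Matrix.mulVec_mulVec, Matrix.mul_nonsing_inv _ hdet, Matrix.one_mulVec]
  · intro j
    have h1 : Km *ᵥ (Km⁻¹ *ᵥ y) = y := by
      rw [Matrix.mulVec_mulVec, Matrix.mul_nonsing_inv _ hdet, Matrix.one_mulVec]
    calc ∑ i, (Km⁻¹ *ᵥ y) i * Real.exp (-γ * ‖x i - x j‖ ^ 2)
        = ∑ i, Km j i * (Km⁻¹ *ᵥ y) i := by
          refine Finset.sum_congr rfl fun i _ => ?_
          rw [mul_comm]
          congr 1
          exact (hsymm i j).symm ▸ rfl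
      _ = (Km *ᵥ (Km⁻¹ *ᵥ y)) j := rfl
      _ = y j := by rw [h1]
  · rintro θ' ⟨h1', -⟩
    calc θ' = Km⁻¹ *ᵥ (Km *ᵥ θ') := by
          rw [Matrix.mulVec_mulVec, Matrix.nonsing_inv_mul _ hdet, Matrix.one_mulVec]
      _ = Km⁻¹ *ᵥ y := by rw [h1']
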